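/- Assume generalized conharmonic recurrence with recurrence 1-forms A and B, i.e. ∇_U ℂ = A(U)·ℂ + B(U)·G for all U ∈ V. If in addition ∇_U Ric = −((n−2)/2)·B(U)·g for all U, then the space is hyper-generalized recurrent: ∇_U R = A(U)·R + D(U)·(g∧Ric) for all U, where D := −(1/(n−2))·A is a nonzero 1-form. (Theorem 3.4(a).) -/

import Mathlib

open scoped BigOperators

/-- Kulkarni–Nomizu product of two bilinear forms (as real-valued functions). -/
def KN {V : Type*} (h k : V → V → ℝ) (X Y Z W : V) : ℝ :=
  h X Z * k Y W + h Y W * k X Z - h X W * k Y Z - h Y Z * k X W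

/-- The tensor `G(X,Y,Z,W) = g(X,Z)g(Y,W) - g(Y,Z)g(X,W)`. -/
def Gten {V : Type*} (g : V → V → ℝ) (X Y Z W : V) : ℝ :=
  g X Z * g Y W - g Y Z * g X W

/-- Derivation action of the curvature endomorphism `Rend U V` on a quadrilinear form `T`. -/
def derAct {V : Type*} (Rend : V → V → V → V) (T : V → V → V → V → ℝ)
    (U V' X Y Z W : V) : ℝ :=
  - T (Rend U V' X) Y Z W - T X (Rend U V' Y) Z W
    - T X Y (Rend U V' Z) W - T X Y Z (Rend U V' W)

theorem gcr_to_hyper_generalized_recurrent {V : Type*} [AddCommGroup V] [Module ℝ V]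
    (n : ℕ) (hn : 3 ≤ n)
    (b : Module.Basis (Fin n) ℝ V) (e' : Fin n → V)
    (g : V →ₗ[ℝ] V →ₗ[ℝ] ℝ)
    (hg_symm : ∀ X Y, g X Y = g Y X)
    (hg_nd : ∀ X, (∀ Y, g X Y = 0) → X = 0)
    (hdual : ∀ i j, g (b i) (e' j) = if i = j then (1 : ℝ) else 0)
    (R : V →ₗ[ℝ] V →ₗ[ℝ] V →ₗ[ℝ] V →ₗ[ℝ] ℝ)
    (hR_ne : R ≠ 0)
    (hR_anti : ∀ X Y Z W, R X Y Z W = - R Y X Z W)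
    (hR_pair : ∀ X Y Z W, R X Y Z W = R Z W X Y)
    (Ric : V → V → ℝ)
    (hRic : ∀ X Z, Ric X Z = ∑ i, R X (b i) Z (e' i))
    (r : ℝ) (hr : r = ∑ i, Ric (b i) (e' i))
    (D : V →ₗ[ℝ] V →ₗ[ℝ] V →ₗ[ℝ] V →ₗ[ℝ] V →ₗ[ℝ] ℝ)
    (DRic : V → V → V → ℝ)
    (hDRic_symm : ∀ U X Z, DRic U X Z = DRic U Z X)
    (A B : V →ₗ[ℝ] ℝ) (hA : A ≠ 0) (hB : B ≠ 0)
    (hGCR : ∀ U X Y Z W,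
      D U X Y Z W - (1 / ((n : ℝ) - 2)) * KN (fun a c => g a c) (DRic U) X Y Z W
        = A U * (R X Y Z W - (1 / ((n : ℝ) - 2)) * KN (fun a c => g a c) Ric X Y Z W)
          + B U * Gten (fun a c => g a c) X Y Z W)
    (hDRic : ∀ U X Z, DRic U X Z = -(((n : ℝ) - 2) / 2) * B U * g X Z)
    :
    (-(1 / ((n : ℝ) - 2))) • A ≠ (0 : V →ₗ[ℝ] ℝ) ∧
    ∀ U X Y Z W, D U X Y Z W
      = A U * R X Y Z W
        + ((-(1 / ((n : ℝ) - 2))) • A) U * KN (fun a c => g a c) Ric X Y Z W := by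
  have hne : ((n : ℝ) - 2) ≠ 0 := by
    have : (3 : ℝ) ≤ (n : ℝ) := by exact_mod_cast hn
    linarith
  constructor
  · intro h
    rcases smul_eq_zero.mp h with hc | hA0
    · have : (1 / ((n : ℝ) - 2)) ≠ 0 := one_div_ne_zero hne
      simp at hc
      exact hne hc
    · exact hA hA0
  · intro U X Y Z W
    have h := hGCR U X Y Z W
    simp only [KN, Gten, hDRic, LinearMap.smul_apply, smul_eq_mul] at h ⊢
    have key : (1 / ((n : ℝ) - 2)) * ((n : ℝ) - 2) = 1 := by field_simp
    linear_combination h - B U * ((g X) Z * (g Y) W - (g Y) Z * (g X) W) * key
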